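/- Define s_i = Σ_k p(k)·s_{k,i} and s_{(k),i} = Σ_k p(k)·k·s_{k,i}. If each s_{k,i} evolves according to the graph mean field ODE ṡ_{k,i} = x_cλ(s_{k,i-1} − s_{k,i})·z_{k,i}(s) − μ(s_{k,i} − s_{k,i+1}), then the aggregate s_i satisfies ṡ_i = (x_cλ/k̄)·(s_{i-1}·s_{(k),i-1} − s_i·s_{(k),i}) − μ·(s_i − s_{i+1}). -/

import Mathlib

open Finset Filter

/-- `zfun K p kbar s k i` is the quantity `z_{k,i+1}(s)` of the graph mean field model:
`(1/2) * Σ_{k'∈K} ((k'+k)/k̄) p(k') (s_{k',i} + s_{k',i+1})`. -/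
noncomputable def zfun (K : Finset ℕ) (p : ℕ → ℝ) (kbar : ℝ) (s : ℕ → ℕ → ℝ) (k i : ℕ) : ℝ :=
  (1/2) * ∑ k' ∈ K, (((k' : ℝ) + (k : ℝ)) / kbar) * p k' * (s k' i + s k' (i+1))

/-- The aggregate state `s_i = Σ_k p(k) s_{k,i}` satisfies
`ṡ_i = (x_cλ/k̄)(s_{i-1} s_{(k),i-1} - s_i s_{(k),i}) - μ (s_i - s_{i+1})`
(stated at level `i+1`, i.e. for all `i ≥ 1`). -/
theorem aggregate_ode (K : Finset ℕ) (p : ℕ → ℝ)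
    (hp : ∀ k ∈ K, 0 ≤ p k) (hpsum : ∑ k ∈ K, p k = 1)
    (kbar : ℝ) (hkbar : kbar = ∑ k ∈ K, p k * (k : ℝ)) (hkpos : 0 < kbar)
    (xcl mu : ℝ) (hx : 0 < xcl) (hmu : 0 < mu)
    (s : ℝ → ℕ → ℕ → ℝ)
    (hs0 : ∀ τ k, s τ k 0 = 1)
    (hode : ∀ τ : ℝ, ∀ k ∈ K, ∀ i : ℕ,
      HasDerivAt (fun τ' => s τ' k (i+1))
        (xcl * (s τ k i - s τ k (i+1)) * zfun K p kbar (s τ) k i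
          - mu * (s τ k (i+1) - s τ k (i+2))) τ) :
    ∀ τ : ℝ, ∀ i : ℕ,
      HasDerivAt (fun τ' => ∑ k ∈ K, p k * s τ' k (i+1))
        (xcl / kbar *
          ((∑ k ∈ K, p k * s τ k i) * (∑ k ∈ K, p k * (k : ℝ) * s τ k i)
            - (∑ k ∈ K, p k * s τ k (i+1)) * (∑ k ∈ K, p k * (k : ℝ) * s τ k (i+1)))
          - mu * ((∑ k ∈ K, p k * s τ k (i+1)) - (∑ k ∈ K, p k * s τ k (i+2)))) τ := by
  intro τ i
  have hk0 : kbar ≠ 0 := ne_of_gt hkpos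
  have h : HasDerivAt (fun τ' => ∑ k ∈ K, p k * s τ' k (i+1))
      (∑ k ∈ K, p k * (xcl * (s τ k i - s τ k (i+1)) * zfun K p kbar (s τ) k i
          - mu * (s τ k (i+1) - s τ k (i+2)))) τ :=
    HasDerivAt.fun_sum (fun k hk => (hode τ k hk i).const_mul (p k))
  convert h using 1
  simp only [zfun]
  set a : ℕ → ℝ := fun k => s τ k i with ha
  set b : ℕ → ℝ := fun k => s τ k (i+1) with hb
  set c : ℕ → ℝ := fun k => s τ k (i+2) with hc
  set W : ℝ := ∑ k' ∈ K, (k' : ℝ) * p k' * (a k' + b k') with hW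
  set V : ℝ := ∑ k' ∈ K, p k' * (a k' + b k') with hV
  have step1 : ∀ k ∈ K,
      p k * (xcl * (a k - b k) *
          ((1/2) * ∑ k' ∈ K, (((k' : ℝ) + (k : ℝ)) / kbar) * p k' * (a k' + b k'))
        - mu * (b k - c k))
      = xcl / (2*kbar) * ((p k * a k - p k * b k) * W)
        + xcl / (2*kbar) * ((p k * (k:ℝ) * a k - p k * (k:ℝ) * b k) * V)
        - mu * (p k * b k - p k * c k) := by
    intro k hk
    have hin : ∑ k' ∈ K, (((k' : ℝ) + (k : ℝ)) / kbar) * p k' * (a k' + b k')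
        = (W + (k:ℝ) * V) / kbar := by
      have hterm : ∀ k' ∈ K, (((k' : ℝ) + (k : ℝ)) / kbar) * p k' * (a k' + b k')
          = ((k':ℝ) * p k' * (a k' + b k') + (k:ℝ) * (p k' * (a k' + b k'))) / kbar := by
        intro k' _
        field_simp
      rw [Finset.sum_congr rfl hterm, ← Finset.sum_div, Finset.sum_add_distrib,
        ← Finset.mul_sum]
    rw [hin]
    field_simp
  rw [Finset.sum_congr rfl step1]
  have hW' : W = (∑ k ∈ K, p k * (k:ℝ) * a k) + (∑ k ∈ K, p k * (k:ℝ) * b k) := by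
    rw [hW, ← Finset.sum_add_distrib]
    exact Finset.sum_congr rfl (fun k _ => by ring)
  have hV' : V = (∑ k ∈ K, p k * a k) + (∑ k ∈ K, p k * b k) := by
    rw [hV, ← Finset.sum_add_distrib]
    exact Finset.sum_congr rfl (fun k _ => by ring)
  simp only [Finset.sum_sub_distrib, Finset.sum_add_distrib, ← Finset.mul_sum,
    ← Finset.sum_mul, Finset.sum_sub_distrib]
  rw [hW', hV']
  field_simp
  ring
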